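/- Let A ∈ ℝ^{n×n} be Hurwitz, B ∈ ℝ^{n×1}, C ∈ ℝ^{1×n} (single-input single-output). Then the minimum IOS-gain and the minimum output asymptotic gain of the system ẋ = Ax + Bu, y = Cx are both equal to the L¹ norm of the impulse response: γ = γ_as = ∫₀^{+∞} |C e^{As} B| ds, and this integral is finite. -/

import Mathlib

open Filter MeasureTheory NormedSpace

noncomputable section

/-- Euclidean norm of a vector in `ℝ^k`. -/
def eNorm {k : ℕ} (v : Fin k → ℝ) : ℝ := Real.sqrt (∑ i, v i ^ 2)

/-- Matrix norm induced by the Euclidean norms. -/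
def matNorm {k l : ℕ} (M : Matrix (Fin k) (Fin l) ℝ) : ℝ :=
  sSup {r | ∃ x : Fin l → ℝ, eNorm x = 1 ∧ r = eNorm (M.mulVec x)}

/-- `A` is Hurwitz: every (complex) eigenvalue of `A` has negative real part. -/
def Hurwitz {n : ℕ} (A : Matrix (Fin n) (Fin n) ℝ) : Prop :=
  ∀ μ ∈ spectrum ℂ (A.map (Complex.ofReal)), μ.re < 0

/-- The matrix exponential `e^{tA}`. -/
def mexp {n : ℕ} (A : Matrix (Fin n) (Fin n) ℝ) (t : ℝ) : Matrix (Fin n) (Fin n) ℝ :=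
  exp (t • A)

namespace Statement11Aux

open scoped Matrix

/-- The impulse response of the SISO system. -/
def impulse {n : ℕ} (A : Matrix (Fin n) (Fin n) ℝ) (B C : Fin n → ℝ) (s : ℝ) : ℝ :=
  dotProduct C ((mexp A s).mulVec B)

variable {n : ℕ}

/-! ### Elementary facts about `Real.sign` -/

lemma mul_sign_self (x : ℝ) : x * Real.sign x = |x| := by
  rcases lt_trichotomy x 0 with hx | hx | hx
  · rw [Real.sign_of_neg hx, abs_of_neg hx]; ring
  · simp [hx]
  · rw [Real.sign_of_pos hx, abs_of_pos hx]; ring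

lemma abs_sign_le (x : ℝ) : |Real.sign x| ≤ 1 := by
  rcases Real.sign_apply_eq x with h | h | h <;> rw [h] <;> norm_num

lemma measurable_sign : Measurable Real.sign := by
  have : Real.sign = fun r : ℝ => if r < 0 then (-1:ℝ) else if 0 < r then 1 else 0 := by
    funext r; rfl
  rw [this]
  exact Measurable.ite (measurableSet_lt measurable_id measurable_const) measurable_const
    (Measurable.ite (measurableSet_lt measurable_const measurable_id) measurable_const
      measurable_const)

/-! ### Continuity of matrix exponentials -/

lemma cont_impulse (A : Matrix (Fin n) (Fin n) ℝ) (B C : Fin n → ℝ) :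
    Continuous (impulse A B C) := by
  have h1 : Continuous fun s : ℝ => mexp A s := by
    letI : SeminormedRing (Matrix (Fin n) (Fin n) ℝ) := Matrix.linftyOpSemiNormedRing
    letI : NormedRing (Matrix (Fin n) (Fin n) ℝ) := Matrix.linftyOpNormedRing
    letI : NormedAlgebra ℝ (Matrix (Fin n) (Fin n) ℝ) := Matrix.linftyOpNormedAlgebra
    letI : NormedAlgebra ℚ (Matrix (Fin n) (Fin n) ℝ) := Matrix.linftyOpNormedAlgebra
    exact (exp_continuous (𝔸 := Matrix (Fin n) (Fin n) ℝ)).comp (continuous_id.smul continuous_const)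
  unfold impulse
  simp only [dotProduct, Matrix.mulVec]
  refine continuous_finset_sum _ fun i _ => Continuous.mul continuous_const ?_
  refine continuous_finset_sum _ fun j _ => Continuous.mul ?_ continuous_const
  exact ((continuous_apply j).comp ((continuous_apply i).comp h1))

lemma cont_dot_c (A' : Matrix (Fin n) (Fin n) ℂ) (Cc v : Fin n → ℂ) :
    Continuous fun s : ℝ => dotProduct Cc ((exp ((s : ℂ) • A')) *ᵥ v) := by
  have h1 : Continuous fun s : ℝ => exp ((s : ℂ) • A') := by
    letI : SeminormedRing (Matrix (Fin n) (Fin n) ℂ) := Matrix.linftyOpSemiNormedRing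
    letI : NormedRing (Matrix (Fin n) (Fin n) ℂ) := Matrix.linftyOpNormedRing
    letI : NormedAlgebra ℂ (Matrix (Fin n) (Fin n) ℂ) := Matrix.linftyOpNormedAlgebra
    letI : NormedAlgebra ℚ (Matrix (Fin n) (Fin n) ℂ) := Matrix.linftyOpNormedAlgebra
    exact (exp_continuous (𝔸 := Matrix (Fin n) (Fin n) ℂ)).comp (Complex.continuous_ofReal.smul continuous_const)
  simp only [dotProduct, Matrix.mulVec]
  refine continuous_finset_sum _ fun i _ => Continuous.mul continuous_const ?_
  refine continuous_finset_sum _ fun j _ => Continuous.mul ?_ continuous_const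
  exact (continuous_apply j).comp ((continuous_apply i).comp h1)

/-! ### Integrability of the impulse response -/

lemma pow_mul_exp_integrable (j : ℕ) {c : ℝ} (hc : c < 0) :
    IntegrableOn (fun s : ℝ => s ^ j * Real.exp (c * s)) (Set.Ioi 0) := by
  have h := integrableOn_rpow_mul_exp_neg_mul_rpow (s := (j:ℝ)) (p := 1) (b := -c)
    (by have := Nat.cast_nonneg (α := ℝ) j; linarith) zero_lt_one (by linarith)
  refine h.congr_fun (fun x hx => ?_) measurableSet_Ioi
  rw [Set.mem_Ioi] at hx
  beta_reduce
  rw [Real.rpow_natCast, Real.rpow_one, neg_neg]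

lemma exp_mulVec_nilp (N : Matrix (Fin n) (Fin n) ℂ) (v : Fin n → ℂ) (k : ℕ)
    (hk : N ^ k *ᵥ v = 0) (c : ℂ) :
    (exp (c • N)) *ᵥ v =
      ∑ j ∈ Finset.range k, (c ^ j * ((j.factorial : ℂ))⁻¹) • (N ^ j *ᵥ v) := by
  letI : SeminormedRing (Matrix (Fin n) (Fin n) ℂ) := Matrix.linftyOpSemiNormedRing
  letI : NormedRing (Matrix (Fin n) (Fin n) ℂ) := Matrix.linftyOpNormedRing
  letI : NormedAlgebra ℂ (Matrix (Fin n) (Fin n) ℂ) := Matrix.linftyOpNormedAlgebra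
  letI : NormedAlgebra ℚ (Matrix (Fin n) (Fin n) ℂ) := Matrix.linftyOpNormedAlgebra
  have hsum : HasSum (fun j : ℕ => ((j.factorial : ℂ))⁻¹ • (c • N) ^ j) (exp (c • N)) :=
    exp_series_hasSum_exp' (𝕂 := ℂ) (c • N)
  let L : Matrix (Fin n) (Fin n) ℂ →ₗ[ℂ] (Fin n → ℂ) :=
    { toFun := fun M => M *ᵥ v
      map_add' := fun M P => Matrix.add_mulVec M P v
      map_smul' := fun r M => Matrix.smul_mulVec r M v }
  have hL : Continuous L := L.continuous_of_finiteDimensional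
  have h2 : HasSum (fun j : ℕ => ((j.factorial : ℂ))⁻¹ • ((c • N) ^ j *ᵥ v))
      (exp (c • N) *ᵥ v) := by
    let L' : Matrix (Fin n) (Fin n) ℂ →L[ℂ] (Fin n → ℂ) := ⟨L, hL⟩
    have := hsum.mapL L'
    simpa [L', L] using this
  rw [← h2.tsum_eq, tsum_eq_sum (s := Finset.range k) ?h0]
  · refine Finset.sum_congr rfl fun j hj => ?_
    rw [smul_pow, Matrix.smul_mulVec, smul_smul, mul_comm]
  · intro j hj
    rw [Finset.mem_range, not_lt] at hj
    have hz : N ^ j *ᵥ v = 0 := by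
      have hnj : N ^ j = N ^ (j - k) * N ^ k := by rw [← pow_add]; congr 1; omega
      rw [hnj, ← Matrix.mulVec_mulVec, hk, Matrix.mulVec_zero]
    rw [smul_pow, Matrix.smul_mulVec, hz, smul_zero, smul_zero]

lemma integrable_dot_aux (A' : Matrix (Fin n) (Fin n) ℂ) (Cc : Fin n → ℂ)
    (hA : ∀ μ ∈ spectrum ℂ A', μ.re < 0) (v : Fin n → ℂ) :
    IntegrableOn (fun s : ℝ => dotProduct Cc ((exp ((s : ℂ) • A')) *ᵥ v))
      (Set.Ioi 0) := by
  let V : Submodule ℂ (Fin n → ℂ) :=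
    { carrier := {v | IntegrableOn
        (fun s : ℝ => dotProduct Cc ((exp ((s : ℂ) • A')) *ᵥ v)) (Set.Ioi 0)}
      add_mem' := fun {v} {w} hv hw => by
        simp only [Set.mem_setOf_eq, Matrix.mulVec_add, dotProduct_add]; exact hv.add hw
      zero_mem' := by simp [Matrix.mulVec_zero, dotProduct_zero, integrable_zero]
      smul_mem' := fun c {w} hw => by
        simp only [Set.mem_setOf_eq, Matrix.mulVec_smul, dotProduct_smul, smul_eq_mul]; exact hw.const_mul c }
  suffices hV : v ∈ V from hV
  let f : Module.End ℂ (Fin n → ℂ) := Matrix.toLinAlgEquiv' A'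
  have htop := Module.End.iSup_maxGenEigenspace_eq_top f
  have hv : v ∈ (⨆ μ, f.maxGenEigenspace μ) := htop.symm ▸ Submodule.mem_top
  refine (iSup_le fun μ => ?_ : (⨆ μ, f.maxGenEigenspace μ) ≤ V) hv
  intro w hw
  rcases eq_or_ne w 0 with rfl | hw0
  · exact V.zero_mem
  obtain ⟨k, hk⟩ := (Module.End.mem_maxGenEigenspace f μ w).mp hw
  -- the eigenvalue has negative real part
  have hμ : μ.re < 0 := by
    apply hA
    have hgen : f.HasGenEigenvalue μ k := by
      rw [Module.End.hasGenEigenvalue_iff, Submodule.ne_bot_iff]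
      exact ⟨w, Module.End.mem_genEigenspace.mpr ⟨k, by exact_mod_cast le_rfl, hk⟩, hw0⟩
    have hev : f.HasEigenvalue μ := Module.End.hasEigenvalue_of_hasGenEigenvalue hgen
    have := Module.End.hasEigenvalue_iff_mem_spectrum.mp hev
    rwa [AlgEquiv.spectrum_eq Matrix.toLinAlgEquiv' A'] at this
  -- matrix-level nilpotency
  let N : Matrix (Fin n) (Fin n) ℂ := A' - μ • 1
  have hNk : N ^ k *ᵥ w = 0 := by
    have h1 : (f - μ • 1) = Matrix.toLinAlgEquiv' N := by
      simp [N, f, map_sub, _root_.map_smul, map_one]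
    have h2 : ((f - μ • 1) ^ k) w = (N ^ k) *ᵥ w := by
      rw [h1, ← map_pow, Matrix.toLinAlgEquiv'_apply]
    rw [← h2, hk]
  -- the linear functional
  let ℓ : (Fin n → ℂ) →ₗ[ℂ] ℂ :=
    { toFun := fun x => dotProduct Cc x
      map_add' := fun x y => dotProduct_add Cc x y
      map_smul' := fun a x => dotProduct_smul a Cc x }
  let d : ℕ → ℂ := fun j => dotProduct Cc (N ^ j *ᵥ w)
  have hform : ∀ s : ℝ, dotProduct Cc ((exp ((s : ℂ) • A')) *ᵥ w)
      = Complex.exp ((s : ℂ) * μ) *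
        ∑ j ∈ Finset.range k, ((s : ℂ) ^ j * ((j.factorial : ℂ))⁻¹) * d j := by
    intro s
    letI : SeminormedRing (Matrix (Fin n) (Fin n) ℂ) := Matrix.linftyOpSemiNormedRing
    letI : NormedRing (Matrix (Fin n) (Fin n) ℂ) := Matrix.linftyOpNormedRing
    letI : NormedAlgebra ℂ (Matrix (Fin n) (Fin n) ℂ) := Matrix.linftyOpNormedAlgebra
    letI : NormedAlgebra ℚ (Matrix (Fin n) (Fin n) ℂ) := Matrix.linftyOpNormedAlgebra
    have hsplit : (s : ℂ) • A' = ((s : ℂ) * μ) • (1 : Matrix (Fin n) (Fin n) ℂ) + (s : ℂ) • N := by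
      simp only [N, smul_sub, smul_smul]
      abel
    have hcomm : Commute (((s : ℂ) * μ) • (1 : Matrix (Fin n) (Fin n) ℂ)) ((s : ℂ) • N) :=
      ((Commute.one_left N).smul_left _).smul_right _
    have hexp1 : exp (((s : ℂ) * μ) • (1 : Matrix (Fin n) (Fin n) ℂ))
        = Complex.exp ((s : ℂ) * μ) • (1 : Matrix (Fin n) (Fin n) ℂ) := by
      have := algebraMap_exp_comm (𝕂 := ℂ) (𝔸 := Matrix (Fin n) (Fin n) ℂ) ((s : ℂ) * μ)
      rw [Algebra.algebraMap_eq_smul_one, Algebra.algebraMap_eq_smul_one,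
        ← Complex.exp_eq_exp_ℂ] at this
      exact this.symm
    rw [hsplit, Matrix.exp_add_of_commute _ _ hcomm, hexp1, smul_mul_assoc, one_mul,
      Matrix.smul_mulVec, exp_mulVec_nilp N w k hNk ((s : ℂ))]
    have : dotProduct Cc
        (∑ j ∈ Finset.range k, ((s : ℂ) ^ j * ((j.factorial : ℂ))⁻¹) • (N ^ j *ᵥ w))
        = ∑ j ∈ Finset.range k, ((s : ℂ) ^ j * ((j.factorial : ℂ))⁻¹) * d j := by
      have := map_sum ℓ (fun j => ((s : ℂ) ^ j * ((j.factorial : ℂ))⁻¹) • (N ^ j *ᵥ w))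
        (Finset.range k)
      simp only [ℓ, LinearMap.coe_mk, AddHom.coe_mk, _root_.map_smul] at this ⊢
      rw [this]
      refine Finset.sum_congr rfl fun j _ => ?_
      simp [dotProduct_smul, smul_eq_mul, d]
    rw [dotProduct_smul, this, smul_eq_mul]
  -- dominating function
  set G : ℝ → ℝ := fun s => ∑ j ∈ Finset.range k,
    (‖d j‖ * ((j.factorial : ℝ))⁻¹) * (s ^ j * Real.exp (μ.re * s)) with hGdef
  have hG : IntegrableOn G (Set.Ioi 0) :=
    integrable_finset_sum _ fun j _ => (pow_mul_exp_integrable j hμ).const_mul _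
  refine Integrable.mono' hG ((cont_dot_c A' Cc w).aestronglyMeasurable.restrict) ?_
  rw [ae_restrict_iff' measurableSet_Ioi]
  refine Filter.Eventually.of_forall fun s hs => ?_
  rw [Set.mem_Ioi] at hs
  rw [hform s, hGdef]
  rw [norm_mul]
  have h1 : ‖Complex.exp ((s : ℂ) * μ)‖ = Real.exp (μ.re * s) := by
    rw [Complex.norm_exp]
    congr 1
    simp [Complex.mul_re, mul_comm]
  rw [h1]
  refine le_trans (mul_le_mul_of_nonneg_left (norm_sum_le (Finset.range k) _)
    (Real.exp_pos _).le) ?_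
  rw [Finset.mul_sum]
  refine le_of_eq (Finset.sum_congr rfl fun j _ => ?_)
  have he : ‖(s : ℂ) ^ j * ((j.factorial : ℂ))⁻¹ * d j‖
      = s ^ j * ((j.factorial : ℝ))⁻¹ * ‖d j‖ := by
    rw [norm_mul, norm_mul, norm_pow, norm_inv]
    simp [abs_of_pos hs]
  rw [he]
  ring

/-! ### Complexification bridge -/

lemma exp_map_ofReal (A : Matrix (Fin n) (Fin n) ℝ) (s : ℝ) :
    (mexp A s).map Complex.ofReal = exp ((s : ℂ) • (A.map Complex.ofReal)) := by
  letI : SeminormedRing (Matrix (Fin n) (Fin n) ℝ) := Matrix.linftyOpSemiNormedRing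
  letI : NormedRing (Matrix (Fin n) (Fin n) ℝ) := Matrix.linftyOpNormedRing
  letI : NormedAlgebra ℝ (Matrix (Fin n) (Fin n) ℝ) := Matrix.linftyOpNormedAlgebra
  letI : NormedAlgebra ℚ (Matrix (Fin n) (Fin n) ℝ) := Matrix.linftyOpNormedAlgebra
  letI : SeminormedRing (Matrix (Fin n) (Fin n) ℂ) := Matrix.linftyOpSemiNormedRing
  letI : NormedRing (Matrix (Fin n) (Fin n) ℂ) := Matrix.linftyOpNormedRing
  letI : NormedAlgebra ℝ (Matrix (Fin n) (Fin n) ℂ) := Matrix.linftyOpNormedAlgebra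
  let F : Matrix (Fin n) (Fin n) ℝ →+* Matrix (Fin n) (Fin n) ℂ :=
    (Complex.ofRealHom : ℝ →+* ℂ).mapMatrix
  have hF : Continuous F := by
    show Continuous fun M : Matrix (Fin n) (Fin n) ℝ => M.map Complex.ofReal
    exact continuous_pi fun i => continuous_pi fun j =>
      Complex.continuous_ofReal.comp ((continuous_apply j).comp (continuous_apply i))
  have h1 : F (exp (s • A)) = exp (F (s • A)) := map_exp F hF (s • A)
  have h2 : F (s • A) = (s : ℂ) • (A.map Complex.ofReal) := by
    ext i j
    simp [F, RingHom.mapMatrix_apply, Matrix.map_apply, Complex.real_smul]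
  show F (exp (s • A)) = _
  rw [h1, h2]

lemma dot_cast (M : Matrix (Fin n) (Fin n) ℝ) (B C : Fin n → ℝ) :
    ((dotProduct C (M *ᵥ B) : ℝ) : ℂ)
      = dotProduct (fun i => (C i : ℂ))
          ((M.map Complex.ofReal) *ᵥ (fun i => (B i : ℂ))) := by
  simp [dotProduct, Matrix.mulVec, Matrix.map_apply]

lemma impulse_integrable (A : Matrix (Fin n) (Fin n) ℝ) (B C : Fin n → ℝ) (hA : Hurwitz A) :
    IntegrableOn (fun s => |impulse A B C s|) (Set.Ioi 0) := by
  have hintC := integrable_dot_aux (A.map Complex.ofReal) (fun i => (C i : ℂ)) hA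
    (fun i => (B i : ℂ))
  have heq : ∀ s : ℝ, (dotProduct (fun i => (C i : ℂ))
      ((exp ((s : ℂ) • (A.map Complex.ofReal))) *ᵥ (fun i => (B i : ℂ)))).re
      = impulse A B C s := by
    intro s
    rw [← exp_map_ofReal A s, ← dot_cast (mexp A s) B C, Complex.ofReal_re]
    rfl
  exact ((hintC.re).congr (Eventually.of_forall heq)).abs

/-! ### Gain estimates for a general impulse response -/

section Gains
variable {h : ℝ → ℝ}

lemma II (hcont : Continuous h) (t a b : ℝ) {u : ℝ → ℝ} (hu : Measurable u)
    (hb : ∀ᵐ s ∂(volume.restrict (Set.uIoc a b)), |u s| ≤ 1) :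
    IntervalIntegrable (fun s => h (t - s) * u s) volume a b := by
  have hg : IntervalIntegrable (fun s => |h (t - s)|) volume a b :=
    ((hcont.comp (continuous_const.sub continuous_id)).abs).intervalIntegrable a b
  refine hg.mono_fun ?_ ?_
  · exact ((hcont.comp (continuous_const.sub continuous_id)).measurable.mul
      hu).aestronglyMeasurable
  · refine hb.mono fun s hs => ?_
    simp only [Real.norm_eq_abs, abs_abs, abs_mul]
    exact mul_le_of_le_one_right (abs_nonneg _) hs

lemma J_le (hint : IntegrableOn (fun s => |h s|) (Set.Ioi 0)) (T : ℝ) (hT : 0 ≤ T) :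
    (∫ s in (0:ℝ)..T, |h s|) ≤ ∫ s in Set.Ioi 0, |h s| := by
  rw [intervalIntegral.integral_of_le hT]
  exact setIntegral_mono_set hint (Eventually.of_forall fun s => abs_nonneg _)
    (HasSubset.Subset.eventuallyLE Set.Ioc_subset_Ioi_self)

lemma comp_sub (t a b : ℝ) :
    (∫ s in a..b, |h (t - s)|) = ∫ s in (t-b)..(t-a), |h s| := by
  simpa using intervalIntegral.integral_comp_sub_left (fun s => |h s|) t

lemma upper' (hcont : Continuous h) (t a b : ℝ) (hab : a ≤ b) {u : ℝ → ℝ} (hu : Measurable u)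
    (hb : ∀ᵐ s ∂(volume.restrict (Set.Ioc a b)), |u s| ≤ 1) :
    |∫ s in a..b, h (t - s) * u s| ≤ ∫ s in (t-b)..(t-a), |h s| := by
  rw [← comp_sub]
  have hb' : ∀ᵐ s ∂(volume.restrict (Set.uIoc a b)), |u s| ≤ 1 := by
    rwa [Set.uIoc_of_le hab]
  refine le_trans (intervalIntegral.abs_integral_le_integral_abs hab) ?_
  rw [intervalIntegral.integral_of_le hab, intervalIntegral.integral_of_le hab]
  refine setIntegral_mono_ae_restrict ((II hcont t a b hu hb').abs.1) ?_ ?_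
  · exact (((hcont.comp (continuous_const.sub continuous_id)).abs).intervalIntegrable a b).1
  · refine hb.mono fun s hs => ?_
    simp only [abs_mul]
    exact mul_le_of_le_one_right (abs_nonneg _) hs

lemma upper (hcont : Continuous h) (hint : IntegrableOn (fun s => |h s|) (Set.Ioi 0))
    (t : ℝ) (ht : 0 ≤ t) {u : ℝ → ℝ} (hu : Measurable u)
    (hb : ∀ᵐ s ∂(volume.restrict (Set.Ici (0:ℝ))), |u s| ≤ 1) :
    |∫ s in (0:ℝ)..t, h (t - s) * u s| ≤ ∫ s in Set.Ioi 0, |h s| := by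
  have hb' : ∀ᵐ s ∂(volume.restrict (Set.Ioc (0:ℝ) t)), |u s| ≤ 1 :=
    ae_restrict_of_ae_restrict_of_subset (fun s hs => le_of_lt hs.1) hb
  refine le_trans (upper' hcont t 0 t ht hu hb') ?_
  rw [sub_self, sub_zero]
  exact J_le hint t ht

lemma sign_witness (hcont : Continuous h) (T : ℝ) (hT : 0 ≤ T) :
    (∫ s in (0:ℝ)..T, h (T - s) * Real.sign (h (T - s))) = ∫ s in (0:ℝ)..T, |h s| := by
  have h1 : ∀ s, h (T - s) * Real.sign (h (T - s)) = |h (T - s)| := fun s => mul_sign_self _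
  simp_rw [h1]
  rw [comp_sub, sub_self, sub_zero]

lemma blocks (hcont : Continuous h) (hint : IntegrableOn (fun s => |h s|) (Set.Ioi 0))
    (T : ℝ) (hT : 0 < T) :
    ∃ u : ℝ → ℝ, Measurable u ∧ (∀ s, |u s| ≤ 1) ∧
      ∀ k : ℕ, 1 ≤ k →
        2 * (∫ s in (0:ℝ)..T, |h s|) - (∫ s in Set.Ioi 0, |h s|)
          ≤ ∫ s in (0:ℝ)..((k:ℝ) * T), h ((k:ℝ) * T - s) * u s := by
  set u : ℝ → ℝ := fun s => Real.sign (h (T * ((⌊s / T⌋ : ℤ) + 1) - s)) with hu_def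
  have humeas : Measurable u := by
    apply measurable_sign.comp
    apply hcont.measurable.comp
    apply Measurable.sub ?_ measurable_id
    apply Measurable.const_mul
    exact (measurable_from_top.comp ((measurable_id.div_const T).floor)).add measurable_const
  have hub : ∀ s, |u s| ≤ 1 := fun s => abs_sign_le _
  refine ⟨u, humeas, hub, fun k hk => ?_⟩
  have hk1 : (1:ℝ) ≤ (k:ℝ) := by exact_mod_cast hk
  have ha0 : (0:ℝ) ≤ ((k:ℝ) - 1) * T := by nlinarith
  have hab : ((k:ℝ) - 1) * T ≤ (k:ℝ) * T := by nlinarith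
  set t := (k:ℝ) * T with ht_def
  set a := ((k:ℝ) - 1) * T with ha_def
  have hsplit : (∫ s in (0:ℝ)..t, h (t - s) * u s)
      = (∫ s in (0:ℝ)..a, h (t - s) * u s) + ∫ s in a..t, h (t - s) * u s := by
    rw [intervalIntegral.integral_add_adjacent_intervals
      (II hcont t 0 a humeas (Eventually.of_forall fun s => hub s))
      (II hcont t a t humeas (Eventually.of_forall fun s => hub s))]
  have hblock : (∫ s in a..t, h (t - s) * u s) = ∫ s in (0:ℝ)..T, |h s| := by
    have hne : ∀ᵐ s : ℝ, s ≠ t := by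
      rw [MeasureTheory.ae_iff]
      have : {s : ℝ | ¬s ≠ t} = {t} := by ext x; simp
      rw [this]
      exact Real.volume_singleton
    have hcongr : (∫ s in a..t, h (t - s) * u s) = ∫ s in a..t, |h (t - s)| := by
      apply intervalIntegral.integral_congr_ae
      filter_upwards [hne] with s hs hmem
      rw [Set.uIoc_of_le hab] at hmem
      have hs1 : a < s := hmem.1
      have hs2 : s < t := lt_of_le_of_ne hmem.2 hs
      have hfloor : ⌊s / T⌋ = (k:ℤ) - 1 := by
        rw [Int.floor_eq_iff]
        constructor
        · push_cast
          rw [le_div_iff₀ hT]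
          calc ((k:ℝ) - 1) * T = a := rfl
            _ ≤ s := le_of_lt hs1
        · push_cast
          rw [div_lt_iff₀ hT]
          calc s < t := hs2
            _ = ((k:ℝ) - 1 + 1) * T := by ring
      have harg : T * ((⌊s / T⌋ : ℤ) + 1 : ℝ) - s = t - s := by
        rw [hfloor]
        push_cast
        ring
      rw [hu_def]
      simp only []
      rw [harg, mul_sign_self]
    rw [hcongr, comp_sub, sub_self]
    have : t - a = T := by rw [ht_def, ha_def]; ring
    rw [this]
  have hearly : |∫ s in (0:ℝ)..a, h (t - s) * u s|
      ≤ (∫ s in Set.Ioi 0, |h s|) - ∫ s in (0:ℝ)..T, |h s| := by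
    refine le_trans (upper' hcont t 0 a ha0 humeas (Eventually.of_forall fun s => hub s)) ?_
    rw [sub_zero]
    have hta : t - a = T := by rw [ht_def, ha_def]; ring
    rw [hta]
    have hadj : (∫ s in (0:ℝ)..T, |h s|) + (∫ s in T..t, |h s|) = ∫ s in (0:ℝ)..t, |h s| :=
      intervalIntegral.integral_add_adjacent_intervals
        ((hcont.abs).intervalIntegrable 0 T) ((hcont.abs).intervalIntegrable T t)
    have hJt : (∫ s in (0:ℝ)..t, |h s|) ≤ ∫ s in Set.Ioi 0, |h s| :=
      J_le hint t (le_trans ha0 hab)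
    linarith
  have h1 : -((∫ s in Set.Ioi 0, |h s|) - ∫ s in (0:ℝ)..T, |h s|)
      ≤ ∫ s in (0:ℝ)..a, h (t - s) * u s := by
    have := neg_abs_le (∫ s in (0:ℝ)..a, h (t - s) * u s)
    linarith
  rw [hsplit, hblock]
  linarith

end Gains

end Statement11Aux

open Statement11Aux

/-- Section 5.1, formula (5.7): for a SISO system with Hurwitz `A`, the minimum IOS-gain
and the minimum output asymptotic gain both equal the `L¹` norm of the impulse response
`∫₀^∞ |C e^{As} B| ds`, and this integral is finite. -/
theorem statement_11 {n : ℕ}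
    (A : Matrix (Fin n) (Fin n) ℝ) (B : Fin n → ℝ) (C : Fin n → ℝ)
    (hA : Hurwitz A)
    (y : (ℝ → ℝ) → ℝ → ℝ)
    (hy : y = fun u t => ∫ s in (0 : ℝ)..t,
      dotProduct C ((mexp A (t - s)).mulVec B) * u s)
    (γ γas : ℝ)
    (hγ : γ = sSup {r | ∃ t ≥ (0 : ℝ), ∃ u : ℝ → ℝ, Measurable u ∧
      (∀ᵐ s ∂(volume.restrict (Set.Ici (0 : ℝ))), |u s| ≤ 1) ∧ r = |y u t|})
    (hγas : γas = sSup {r | ∃ u : ℝ → ℝ, Measurable u ∧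
      (∀ᵐ s ∂(volume.restrict (Set.Ici (0 : ℝ))), |u s| ≤ 1) ∧
      r = limsup (fun t => |y u t|) atTop}) :
    IntegrableOn (fun s => |dotProduct C ((mexp A s).mulVec B)|) (Set.Ioi 0) ∧
    γ = ∫ s in Set.Ioi (0 : ℝ), |dotProduct C ((mexp A s).mulVec B)| ∧
    γas = ∫ s in Set.Ioi (0 : ℝ), |dotProduct C ((mexp A s).mulVec B)| := by
  subst hy
  have hcont : Continuous (impulse A B C) := cont_impulse A B C
  have hint : IntegrableOn (fun s => |impulse A B C s|) (Set.Ioi 0) :=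
    impulse_integrable A B C hA
  -- restate the hypotheses in terms of `impulse`
  have hγ' : γ = sSup {r | ∃ t ≥ (0 : ℝ), ∃ u : ℝ → ℝ, Measurable u ∧
      (∀ᵐ s ∂(volume.restrict (Set.Ici (0 : ℝ))), |u s| ≤ 1) ∧
      r = |∫ s in (0 : ℝ)..t, impulse A B C (t - s) * u s|} := hγ
  have hγas' : γas = sSup {r | ∃ u : ℝ → ℝ, Measurable u ∧
      (∀ᵐ s ∂(volume.restrict (Set.Ici (0 : ℝ))), |u s| ≤ 1) ∧
      r = limsup (fun t => |∫ s in (0 : ℝ)..t, impulse A B C (t - s) * u s|) atTop} := hγas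
  set S : Set ℝ := {r | ∃ t ≥ (0 : ℝ), ∃ u : ℝ → ℝ, Measurable u ∧
      (∀ᵐ s ∂(volume.restrict (Set.Ici (0 : ℝ))), |u s| ≤ 1) ∧
      r = |∫ s in (0 : ℝ)..t, impulse A B C (t - s) * u s|} with hS_def
  set S' : Set ℝ := {r | ∃ u : ℝ → ℝ, Measurable u ∧
      (∀ᵐ s ∂(volume.restrict (Set.Ici (0 : ℝ))), |u s| ≤ 1) ∧
      r = limsup (fun t => |∫ s in (0 : ℝ)..t, impulse A B C (t - s) * u s|) atTop} with hS'_def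
  have hJtendsto : Tendsto (fun T : ℝ => ∫ s in (0:ℝ)..T, |impulse A B C s|) atTop
      (nhds (∫ s in Set.Ioi 0, |impulse A B C s|)) :=
    intervalIntegral_tendsto_integral_Ioi 0 hint tendsto_id
  -- upper bounds for elements of S
  have hubS : ∀ r ∈ S, r ≤ ∫ s in Set.Ioi 0, |impulse A B C s| := by
    rintro r ⟨t, ht, u, hu, hb, rfl⟩
    exact upper hcont hint t ht hu hb
  have hbddS : BddAbove S := ⟨_, fun r hr => hubS r hr⟩
  have hS0 : (0:ℝ) ∈ S := by
    refine ⟨0, le_rfl, fun _ => 0, measurable_const,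
      Eventually.of_forall (fun s => by norm_num), ?_⟩
    simp
  -- upper bounds for elements of S'
  have hubS' : ∀ r ∈ S', r ≤ ∫ s in Set.Ioi 0, |impulse A B C s| := by
    rintro r ⟨u, hu, hb, rfl⟩
    have hev : ∀ᶠ t in atTop,
        |∫ s in (0 : ℝ)..t, impulse A B C (t - s) * u s|
          ≤ ∫ s in Set.Ioi 0, |impulse A B C s| :=
      (eventually_ge_atTop 0).mono fun t ht => upper hcont hint t ht hu hb
    exact limsup_le_of_le
      (isCoboundedUnder_le_of_le atTop fun t => abs_nonneg _) hev
  have hbddS' : BddAbove S' := ⟨_, fun r hr => hubS' r hr⟩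
  have hS'0 : (0:ℝ) ∈ S' := by
    refine ⟨fun _ => 0, measurable_const,
      Eventually.of_forall (fun s => by norm_num), ?_⟩
    have hz : (fun t => |∫ s in (0 : ℝ)..t, impulse A B C (t - s) * (0:ℝ)|)
        = fun _ => (0:ℝ) := by
      funext t; simp
    rw [hz, limsup_const]
  refine ⟨hint, ?_, ?_⟩
  · -- the IOS gain
    rw [hγ']
    refine le_antisymm (csSup_le ⟨0, hS0⟩ hubS) ?_
    refine le_of_tendsto hJtendsto ((eventually_ge_atTop 0).mono fun T hT => ?_)
    have hmem : (∫ s in (0:ℝ)..T, |impulse A B C s|) ∈ S := by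
      refine ⟨T, hT, fun s => Real.sign (impulse A B C (T - s)),
        measurable_sign.comp
          ((hcont.comp (continuous_const.sub continuous_id)).measurable),
        Eventually.of_forall fun s => abs_sign_le _, ?_⟩
      rw [sign_witness hcont T hT,
        abs_of_nonneg (intervalIntegral.integral_nonneg hT fun s _ => abs_nonneg _)]
    exact le_csSup hbddS hmem
  · -- the asymptotic gain
    rw [hγas']
    refine le_antisymm (csSup_le ⟨0, hS'0⟩ hubS') ?_
    have htend : Tendsto
        (fun T : ℝ => 2 * (∫ s in (0:ℝ)..T, |impulse A B C s|)
          - ∫ s in Set.Ioi 0, |impulse A B C s|) atTop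
        (nhds (∫ s in Set.Ioi 0, |impulse A B C s|)) := by
      have h2 := (hJtendsto.const_mul 2).sub_const (∫ s in Set.Ioi 0, |impulse A B C s|)
      have : (2:ℝ) * (∫ s in Set.Ioi 0, |impulse A B C s|)
          - (∫ s in Set.Ioi 0, |impulse A B C s|) = ∫ s in Set.Ioi 0, |impulse A B C s| := by
        ring
      rwa [this] at h2
    refine le_of_tendsto htend ((eventually_gt_atTop 0).mono fun T hT => ?_)
    obtain ⟨u, hu, hub1, hblk⟩ := blocks hcont hint T hT
    have hbd : IsBoundedUnder (· ≤ ·) atTop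
        (fun t => |∫ s in (0 : ℝ)..t, impulse A B C (t - s) * u s|) :=
      ⟨∫ s in Set.Ioi 0, |impulse A B C s|,
        (eventually_ge_atTop 0).mono fun t ht =>
          upper hcont hint t ht hu (Eventually.of_forall fun s => hub1 s)⟩
    have hfreq : ∃ᶠ t in atTop,
        2 * (∫ s in (0:ℝ)..T, |impulse A B C s|) - (∫ s in Set.Ioi 0, |impulse A B C s|)
          ≤ |∫ s in (0 : ℝ)..t, impulse A B C (t - s) * u s| := by
      rw [frequently_atTop]
      intro b
      set k : ℕ := max 1 ⌈b / T⌉₊ with hk_def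
      have hk1 : 1 ≤ k := le_max_left _ _
      refine ⟨(k:ℝ) * T, ?_, ?_⟩
      · rcases le_or_gt b 0 with hb | hb
        · have hk0 : (1:ℝ) ≤ (k:ℝ) := by exact_mod_cast hk1
          nlinarith
        · have h1 : b / T ≤ (⌈b / T⌉₊ : ℝ) := Nat.le_ceil _
          have h2 : ((⌈b / T⌉₊ : ℕ) : ℝ) ≤ ((k:ℕ) : ℝ) := by
            exact_mod_cast le_max_right 1 ⌈b / T⌉₊
          have hb' : b = (b / T) * T := by field_simp
          nlinarith
      · exact le_trans (hblk k hk1) (le_abs_self _)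
    have hmem : limsup (fun t => |∫ s in (0 : ℝ)..t, impulse A B C (t - s) * u s|) atTop
        ∈ S' := ⟨u, hu, ae_restrict_of_ae (Eventually.of_forall fun s => hub1 s), rfl⟩
    exact le_trans (le_limsup_of_frequently_le hfreq hbd) (le_csSup hbddS' hmem)
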